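/- arXiv:1903.08997 — 5 statements merged into one kernel-verified Lean document; each statement's English description precedes it below -/
import Mathlib

section
/- The 4-dimensional complex algebra B⁴₁₀ with basis e₁,e₂,e₃,e₄ and nonzero products e₁e₂ = e₃, e₁e₃ = e₄, e₂e₁ = e₄, e₃e₂ = e₄ is a bicommutative algebra, i.e., it satisfies (xy)z = (xz)y and x(yz) = y(xz) for all elements. -/
noncomputable def mB410 : (Fin 4 → ℂ) →ₗ[ℂ] (Fin 4 → ℂ) →ₗ[ℂ] (Fin 4 → ℂ) :=
  LinearMap.mk₂ ℂ (fun u v => ![0, 0, u 0 * v 1, u 0 * v 2 + u 1 * v 0 + u 2 * v 1])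
    (fun x y v => by funext i; fin_cases i <;> simp <;> ring)
    (fun a x v => by funext i; fin_cases i <;> simp <;> ring)
    (fun u x y => by funext i; fin_cases i <;> simp <;> ring)
    (fun u a x => by funext i; fin_cases i <;> simp <;> ring)

/-- The 4-dimensional algebra `B⁴₁₀` (nonzero products `e₁e₂=e₃`, `e₁e₃=e₄`,
`e₂e₁=e₄`, `e₃e₂=e₄`) is bicommutative. -/
theorem B410_bicommutative :
    (∀ x y z : Fin 4 → ℂ, mB410 (mB410 x y) z = mB410 (mB410 x z) y) ∧
      (∀ x y z : Fin 4 → ℂ, mB410 x (mB410 y z) = mB410 y (mB410 x z)) := by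
  constructor <;> intro x y z <;> funext i <;>
    fin_cases i <;> simp [mB410] <;> ring
end

section
/- Every invertible algebra automorphism of the 3-dimensional complex algebra B³₀₁ (with nonzero products e₁e₁ = e₂, e₂e₁ = e₃) has matrix of the form [[x,0,0],[y,x²,0],[z,xy,x³]] with respect to the basis e₁,e₂,e₃, for some x ∈ ℂ*, y,z ∈ ℂ; conversely, every such matrix defines an automorphism. -/
noncomputable def mB301 : (Fin 3 → ℂ) →ₗ[ℂ] (Fin 3 → ℂ) →ₗ[ℂ] (Fin 3 → ℂ) :=
  LinearMap.mk₂ ℂ (fun u v => ![0, u 0 * v 0, u 1 * v 0])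
    (fun x y v => by funext i; fin_cases i <;> simp <;> ring)
    (fun a x v => by funext i; fin_cases i <;> simp <;> ring)
    (fun u x y => by funext i; fin_cases i <;> simp <;> ring)
    (fun u a x => by funext i; fin_cases i <;> simp <;> ring)

lemma mB_apply (u v : Fin 3 → ℂ) : mB301 u v = ![0, u 0 * v 0, u 1 * v 0] := rfl

def B301F (x y z : ℂ) : (Fin 3 → ℂ) →ₗ[ℂ] (Fin 3 → ℂ) where
  toFun u := ![x * u 0, y * u 0 + x ^ 2 * u 1, z * u 0 + x * y * u 1 + x ^ 3 * u 2]
  map_add' u v := by funext i; fin_cases i <;> simp <;> ring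
  map_smul' a u := by funext i; fin_cases i <;> simp <;> ring

noncomputable def B301G (x y z : ℂ) : (Fin 3 → ℂ) →ₗ[ℂ] (Fin 3 → ℂ) where
  toFun u := ![u 0 / x, -y * u 0 / x ^ 3 + u 1 / x ^ 2,
    (y ^ 2 - z * x) * u 0 / x ^ 5 - y * u 1 / x ^ 4 + u 2 / x ^ 3]
  map_add' u v := by funext i; fin_cases i <;> simp <;> ring
  map_smul' a u := by funext i; fin_cases i <;> simp <;> ring

lemma B301FG (x y z : ℂ) (hx : x ≠ 0) :
    (B301F x y z).comp (B301G x y z) = LinearMap.id := by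
  apply LinearMap.ext; intro u; funext i
  fin_cases i <;> simp [B301F, B301G] <;> field_simp <;> ring_nf <;>
    rw [mul_right_comm, inv_pow, mul_inv_cancel₀ (pow_ne_zero _ hx), one_mul]

lemma B301GF (x y z : ℂ) (hx : x ≠ 0) :
    (B301G x y z).comp (B301F x y z) = LinearMap.id := by
  apply LinearMap.ext; intro u; funext i
  fin_cases i <;> simp [B301F, B301G] <;> field_simp <;> ring_nf <;>
    rw [mul_right_comm, inv_pow, mul_inv_cancel₀ (pow_ne_zero _ hx), one_mul]

noncomputable def B301E (x y z : ℂ) (hx : x ≠ 0) : (Fin 3 → ℂ) ≃ₗ[ℂ] (Fin 3 → ℂ) :=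
  LinearEquiv.ofLinear (B301F x y z) (B301G x y z) (B301FG x y z hx) (B301GF x y z hx)

lemma B301E_apply (x y z : ℂ) (hx : x ≠ 0) (u : Fin 3 → ℂ) :
    B301E x y z hx u = ![x * u 0, y * u 0 + x ^ 2 * u 1, z * u 0 + x * y * u 1 + x ^ 3 * u 2] :=
  rfl

/-- The automorphisms of `B³₀₁` are exactly the linear maps with matrix
`[[x,0,0],[y,x²,0],[z,xy,x³]]`, `x ≠ 0`. -/
theorem B301_automorphisms :
    (∀ φ : (Fin 3 → ℂ) ≃ₗ[ℂ] (Fin 3 → ℂ),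
      (∀ u v : Fin 3 → ℂ, φ (mB301 u v) = mB301 (φ u) (φ v)) ↔
      (∃ x y z : ℂ, x ≠ 0 ∧
        φ ((Pi.single 0 1 : Fin 3 → ℂ)) = x • (Pi.single 0 1 : Fin 3 → ℂ) + y • (Pi.single 1 1 : Fin 3 → ℂ) + z • (Pi.single 2 1 : Fin 3 → ℂ) ∧
        φ ((Pi.single 1 1 : Fin 3 → ℂ)) = x ^ 2 • (Pi.single 1 1 : Fin 3 → ℂ) + (x * y) • (Pi.single 2 1 : Fin 3 → ℂ) ∧
        φ ((Pi.single 2 1 : Fin 3 → ℂ)) = x ^ 3 • (Pi.single 2 1 : Fin 3 → ℂ))) ∧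
    (∀ x y z : ℂ, x ≠ 0 →
      ∃ φ : (Fin 3 → ℂ) ≃ₗ[ℂ] (Fin 3 → ℂ),
        (∀ u v : Fin 3 → ℂ, φ (mB301 u v) = mB301 (φ u) (φ v)) ∧
        φ ((Pi.single 0 1 : Fin 3 → ℂ)) = x • (Pi.single 0 1 : Fin 3 → ℂ) + y • (Pi.single 1 1 : Fin 3 → ℂ) + z • (Pi.single 2 1 : Fin 3 → ℂ) ∧
        φ ((Pi.single 1 1 : Fin 3 → ℂ)) = x ^ 2 • (Pi.single 1 1 : Fin 3 → ℂ) + (x * y) • (Pi.single 2 1 : Fin 3 → ℂ) ∧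
        φ ((Pi.single 2 1 : Fin 3 → ℂ)) = x ^ 3 • (Pi.single 2 1 : Fin 3 → ℂ)) := by
  constructor
  · intro φ
    constructor
    · intro h
      set e0 : Fin 3 → ℂ := Pi.single 0 1 with he0
      set e1 : Fin 3 → ℂ := Pi.single 1 1 with he1
      set e2 : Fin 3 → ℂ := Pi.single 2 1 with he2
      have h01 : mB301 e0 e0 = e1 := by
        funext i; fin_cases i <;> simp [mB_apply, he0, he1, Pi.single_apply]
      have h12 : mB301 e1 e0 = e2 := by
        funext i; fin_cases i <;> simp [mB_apply, he0, he1, he2, Pi.single_apply]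
      set a : ℂ := φ e0 0 with ha
      set b : ℂ := φ e0 1 with hb
      set c : ℂ := φ e0 2 with hc
      have hφ1 : φ e1 = ![0, a * a, b * a] := by
        rw [← h01, h]; funext i; fin_cases i <;> simp [mB_apply, ← ha, ← hb]
      have hφ2 : φ e2 = ![0, 0, a * a * a] := by
        rw [← h12, h, hφ1]; funext i; fin_cases i <;> simp [mB_apply, ← ha]
      have hane : a ≠ 0 := by
        intro h0
        have : φ e1 = φ 0 := by
          rw [hφ1, h0, map_zero]; funext i; fin_cases i <;> simp
        have := φ.injective this
        have : (e1 : Fin 3 → ℂ) 1 = 0 := by rw [this]; simp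
        simp [he1] at this
      refine ⟨a, b, c, hane, ?_, ?_, ?_⟩
      · funext i; fin_cases i <;>
          simp [he0, he1, he2, Pi.single_apply, ha, hb, hc]
      · rw [hφ1]; funext i; fin_cases i <;>
          simp [he1, he2, Pi.single_apply] <;> ring
      · rw [hφ2]; funext i; fin_cases i <;>
          simp [he2, Pi.single_apply] <;> ring
    · rintro ⟨x, y, z, hx, h0, h1, h2⟩ u v
      have hu : ∀ w : Fin 3 → ℂ, w = w 0 • (Pi.single 0 1 : Fin 3 → ℂ) + w 1 • (Pi.single 1 1 : Fin 3 → ℂ) + w 2 • (Pi.single 2 1 : Fin 3 → ℂ) := by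
        intro w; funext i; fin_cases i <;> simp [Pi.single_apply]
      have key : ∀ w : Fin 3 → ℂ, φ w = ![x * w 0, y * w 0 + x ^ 2 * w 1, z * w 0 + x * y * w 1 + x ^ 3 * w 2] := by
        intro w
        calc φ w = φ (w 0 • (Pi.single 0 1 : Fin 3 → ℂ) + w 1 • (Pi.single 1 1 : Fin 3 → ℂ) + w 2 • (Pi.single 2 1 : Fin 3 → ℂ)) := by rw [← hu]
        _ = w 0 • φ (Pi.single 0 1 : Fin 3 → ℂ) + w 1 • φ (Pi.single 1 1 : Fin 3 → ℂ) + w 2 • φ (Pi.single 2 1 : Fin 3 → ℂ) := by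
            simp [map_add, map_smul]
        _ = _ := by
            rw [h0, h1, h2]; funext i; fin_cases i <;> simp [Pi.single_apply] <;> ring
      rw [key, key, key, mB_apply, mB_apply]
      funext i; fin_cases i <;> simp <;> ring
  · intro x y z hx
    refine ⟨B301E x y z hx, ?_, ?_, ?_, ?_⟩
    · intro u v
      rw [B301E_apply, B301E_apply, B301E_apply, mB_apply, mB_apply]
      funext i; fin_cases i <;> simp <;> ring
    · rw [B301E_apply]
      funext i; fin_cases i <;> simp [Pi.single_apply]
    · rw [B301E_apply]
      funext i; fin_cases i <;> simp [Pi.single_apply]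
    · rw [B301E_apply]
      funext i; fin_cases i <;> simp [Pi.single_apply]
end

section
/- Up to isomorphism, there is exactly one nonzero 2-dimensional nilpotent bicommutative algebra over ℂ, namely the algebra with basis e₁,e₂ and single nonzero product e₁e₁ = e₂. -/
/-- The model algebra on `ℂ²` with single nonzero product `e₁e₁ = e₂`. -/
noncomputable def m2model : (Fin 2 → ℂ) →ₗ[ℂ] (Fin 2 → ℂ) →ₗ[ℂ] (Fin 2 → ℂ) :=
  LinearMap.mk₂ ℂ (fun u v => ![0, u 0 * v 0])
    (fun x y v => by funext i; fin_cases i <;> simp <;> ring)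
    (fun a x v => by funext i; fin_cases i <;> simp <;> ring)
    (fun u x y => by funext i; fin_cases i <;> simp <;> ring)
    (fun u a x => by funext i; fin_cases i <;> simp <;> ring)

/-- Up to isomorphism, there is exactly one nonzero 2-dimensional nilpotent
bicommutative algebra over `ℂ`: the one with `e₁e₁ = e₂`. -/
theorem unique_two_dim_nilpotent_bicommutative :
    -- the model is a nonzero nilpotent bicommutative algebra
    ((∀ x y z : Fin 2 → ℂ, m2model (m2model x y) z = m2model (m2model x z) y) ∧
     (∀ x y z : Fin 2 → ℂ, m2model x (m2model y z) = m2model y (m2model x z)) ∧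
     (∀ x y z : Fin 2 → ℂ, m2model (m2model x y) z = 0 ∧ m2model x (m2model y z) = 0) ∧
     m2model ≠ 0) ∧
    -- and any such algebra is isomorphic to it
    (∀ (A : Type) (_ : AddCommGroup A) (_ : Module ℂ A), Module.finrank ℂ A = 2 →
      ∀ μ : A →ₗ[ℂ] A →ₗ[ℂ] A,
        (∀ x y z : A, μ (μ x y) z = μ (μ x z) y) →
        (∀ x y z : A, μ x (μ y z) = μ y (μ x z)) →
        (∀ x y z : A, μ (μ x y) z = 0 ∧ μ x (μ y z) = 0) →
        μ ≠ 0 →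
        ∃ φ : A ≃ₗ[ℂ] (Fin 2 → ℂ),
          ∀ u v : A, φ (μ u v) = m2model (φ u) (φ v)) := by
  constructor
  · refine ⟨?_, ?_, ?_, ?_⟩
    · intro x y z; funext i; fin_cases i <;> simp [m2model]
    · intro x y z; funext i; fin_cases i <;> simp [m2model]
    · intro x y z
      constructor <;> (funext i; fin_cases i <;> simp [m2model])
    · intro h
      have h1 : m2model ![1, 0] ![1, 0] 1 = 1 := by simp [m2model]
      rw [h] at h1
      simp at h1
  · intro A _ _ hfr μ hbc1 hbc2 h3 hμ
    have hL : ∀ x y z : A, μ (μ x y) z = 0 := fun x y z => (h3 x y z).1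
    have hR : ∀ x y z : A, μ x (μ y z) = 0 := fun x y z => (h3 x y z).2
    obtain ⟨a, b, hab⟩ : ∃ a b : A, μ a b ≠ 0 := by
      by_contra h
      push_neg at h
      exact hμ (LinearMap.ext fun a => LinearMap.ext fun b => by simpa using h a b)
    -- find an element whose square is nonzero
    obtain ⟨w, hw⟩ : ∃ w : A, μ w w ≠ 0 := by
      by_cases ha : μ a a ≠ 0
      · exact ⟨a, ha⟩
      by_cases hb : μ b b ≠ 0
      · exact ⟨b, hb⟩
      push_neg at ha hb
      refine ⟨a + b, fun hs => ?_⟩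
      have hexp : μ a b + μ b a = 0 := by
        have h' : μ a a + μ b a + (μ a b + μ b b) = 0 := by
          have := hs
          rw [map_add] at this
          simpa [map_add] using this
        rw [ha, hb] at h'
        rw [zero_add, add_zero, add_comm] at h'
        exact h'
      have hba : μ b a = -μ a b := by rwa [add_comm, add_eq_zero_iff_eq_neg] at hexp
      have hli : LinearIndependent ℂ ![a, b] := by
        rw [LinearIndependent.pair_iff]
        intro s t hst
        have hs0 : s = 0 := by
          have h0 : μ (s • a + t • b) b = 0 := by rw [hst]; simp
          rw [map_add, map_smul, map_smul] at h0
          simp only [LinearMap.add_apply, LinearMap.smul_apply, hb, smul_zero, add_zero] at h0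
          rcases smul_eq_zero.mp h0 with h | h
          · exact h
          · exact absurd h hab
        have ht0 : t = 0 := by
          have hb0 : t • b = 0 := by rw [hs0, zero_smul, zero_add] at hst; exact hst
          have h0 : μ a (t • b) = 0 := by rw [hb0]; simp
          rw [map_smul] at h0
          rcases smul_eq_zero.mp h0 with h | h
          · exact h
          · exact absurd h hab
        exact ⟨hs0, ht0⟩
      have hcard : Fintype.card (Fin 2) = Module.finrank ℂ A := by simp [hfr]
      have hsp : Submodule.span ℂ ({a, b} : Set A) = ⊤ := by
        have hr : Set.range ![a, b] = ({a, b} : Set A) := by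
          ext x
          constructor
          · rintro ⟨i, rfl⟩; fin_cases i <;> simp
          · rintro (rfl | rfl)
            · exact ⟨0, rfl⟩
            · exact ⟨1, rfl⟩
        have := (basisOfLinearIndependentOfCardEqFinrank hli hcard).span_eq
        rwa [coe_basisOfLinearIndependentOfCardEqFinrank, hr] at this
      obtain ⟨α, β, hn⟩ := Submodule.mem_span_pair.mp
        (hsp ▸ Submodule.mem_top : μ a b ∈ Submodule.span ℂ ({a, b} : Set A))
      have hα : α = 0 := by
        have h0 : μ (μ a b) b = 0 := hL a b b
        rw [← hn, map_add, map_smul, map_smul] at h0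
        simp only [LinearMap.add_apply, LinearMap.smul_apply, hb, smul_zero, add_zero] at h0
        rcases smul_eq_zero.mp h0 with h | h
        · exact h
        · exact absurd h hab
      have hβ : β = 0 := by
        have h0 : μ (μ a b) a = 0 := hL a b a
        rw [← hn, map_add, map_smul, map_smul] at h0
        simp only [LinearMap.add_apply, LinearMap.smul_apply, ha, smul_zero, zero_add, hba,
          smul_neg] at h0
        rcases smul_eq_zero.mp (neg_eq_zero.mp h0) with h | h
        · exact h
        · exact absurd h hab
      rw [hα, hβ] at hn
      simp at hn
      exact hab hn.symm
    -- build the isomorphism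
    set e2 := μ w w with he2
    have h1 : ∀ x : A, μ x e2 = 0 := fun x => hR x w w
    have h2 : ∀ x : A, μ e2 x = 0 := fun x => hL w w x
    have : Module.Finite ℂ A := Module.finite_of_finrank_eq_succ hfr
    let ψ : (Fin 2 → ℂ) →ₗ[ℂ] A :=
      { toFun := fun c => c 0 • w + c 1 • e2
        map_add' := by intro c d; simp [add_smul]; abel
        map_smul' := by intro s c; simp [smul_smul, smul_add] }
    have hψapp : ∀ c : Fin 2 → ℂ, ψ c = c 0 • w + c 1 • e2 := fun _ => rfl
    have hinj : Function.Injective ψ := by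
      rw [injective_iff_map_eq_zero]
      intro c hc
      have hc' : c 0 • w + c 1 • e2 = 0 := hc
      have h0 : c 0 = 0 := by
        have hm : μ (c 0 • w + c 1 • e2) w = 0 := by rw [hc']; simp
        rw [map_add, map_smul, map_smul] at hm
        simp only [LinearMap.add_apply, LinearMap.smul_apply, h2, smul_zero, add_zero] at hm
        rcases smul_eq_zero.mp hm with h | h
        · exact h
        · exact absurd h hw
      have h1' : c 1 = 0 := by
        rw [h0, zero_smul, zero_add] at hc'
        rcases smul_eq_zero.mp hc' with h | h
        · exact h
        · exact absurd h hw
      funext i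
      fin_cases i
      · exact h0
      · exact h1'
    have hd : Module.finrank ℂ (Fin 2 → ℂ) = Module.finrank ℂ A := by
      simp [hfr]
    let e := ψ.linearEquivOfInjective hinj hd
    have he : ∀ c, e c = ψ c := fun c => ψ.linearEquivOfInjective_apply hinj hd c
    refine ⟨e.symm, fun u v => ?_⟩
    have hψmul : ∀ c d : Fin 2 → ℂ, μ (ψ c) (ψ d) = ψ (m2model c d) := by
      intro c d
      rw [hψapp, hψapp, hψapp]
      rw [map_add, map_smul, map_smul]
      simp only [LinearMap.add_apply, LinearMap.smul_apply, map_add, map_smul, h1, h2,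
        smul_zero, add_zero, zero_add, smul_smul]
      have : m2model c d = ![0, c 0 * d 0] := rfl
      rw [this]
      simp [hψapp, mul_comm, he2]
    have hback : ∀ u : A, ψ (e.symm u) = u := by
      intro u
      have := e.apply_symm_apply u
      rwa [he] at this
    have hfwd : ∀ c : Fin 2 → ℂ, e.symm (ψ c) = c := by
      intro c
      rw [← he]; exact e.symm_apply_apply c
    calc e.symm (μ u v) = e.symm (μ (ψ (e.symm u)) (ψ (e.symm v))) := by rw [hback, hback]
      _ = e.symm (ψ (m2model (e.symm u) (e.symm v))) := by rw [hψmul]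
      _ = m2model (e.symm u) (e.symm v) := hfwd _
end

section
/- B⁴₁₀ degenerates to B⁴₁₃: for each t ∈ ℂ*, the basis E₁ᵗ = te₁, E₂ᵗ = e₂, E₃ᵗ = te₃, E₄ᵗ = te₄ of B⁴₁₀ yields structure constants that are polynomial in t and at t = 0 give the multiplication of B⁴₁₃. Concretely, in B⁴₁₀ one has E₁ᵗE₂ᵗ = E₃ᵗ, E₂ᵗE₁ᵗ = E₄ᵗ, E₃ᵗE₂ᵗ = E₄ᵗ, E₁ᵗE₃ᵗ = tE₄ᵗ, and all other products of the Eᵢᵗ vanish. -/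
set_option maxHeartbeats 1600000 in
/-- `B⁴₁₀` degenerates to `B⁴₁₃`: in the parametrized basis `E₁ᵗ = te₁`, `E₂ᵗ = e₂`,
`E₃ᵗ = te₃`, `E₄ᵗ = te₄` the multiplication of `B⁴₁₀` has polynomial structure
constants whose value at `t = 0` is the multiplication of `B⁴₁₃`. -/
theorem B410_degenerates_to_B413 (t : ℂ) (ht : t ≠ 0) :
    let e : Fin 4 → (Fin 4 → ℂ) := fun i => Pi.single i 1
    let E : Fin 4 → (Fin 4 → ℂ) := ![t • e 0, e 1, t • e 2, t • e 3]
    mB410 (E 0) (E 1) = E 2 ∧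
    mB410 (E 1) (E 0) = E 3 ∧
    mB410 (E 2) (E 1) = E 3 ∧
    mB410 (E 0) (E 2) = t • E 3 ∧
    ∀ i j : Fin 4, (i, j) ∉ ({(0,1), (1,0), (2,1), (0,2)} : Set (Fin 4 × Fin 4)) →
      mB410 (E i) (E j) = 0 := by
  intro e E
  refine ⟨?_, ?_, ?_, ?_, ?_⟩
  · funext k; fin_cases k <;>
      simp [mB410, E, e, Pi.single_apply, Matrix.vecHead, Matrix.vecTail]
  · funext k; fin_cases k <;>
      simp [mB410, E, e, Pi.single_apply, Matrix.vecHead, Matrix.vecTail]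
  · funext k; fin_cases k <;>
      simp [mB410, E, e, Pi.single_apply, Matrix.vecHead, Matrix.vecTail]
  · funext k; fin_cases k <;>
      simp [mB410, E, e, Pi.single_apply, Matrix.vecHead, Matrix.vecTail]
  · intro i j hij
    fin_cases i <;> fin_cases j <;>
      first
      | (funext k; (fin_cases k <;>
          simp [mB410, E, e, Pi.single_apply, Matrix.vecHead, Matrix.vecTail]); done)
      | simp at hij
end

section
/- For the algebra B³₀₁ (nonzero products e₁e₁ = e₂, e₂e₁ = e₃) and automorphism φ with matrix [[x,0,0],[y,x²,0],[z,xy,x³]], the induced action on the cohomology classes ∇₁ = [Δ₁₂] and ∇₂ = [Δ₃₁] satisfies: φ acting on α₁∇₁ + α₂∇₂ gives x³α₁∇₁ + x⁴α₂∇₂ (modulo coboundaries). Concretely: the bilinear form (u,v) ↦ α₁Δ₁₂(φu,φv) + α₂Δ₃₁(φu,φv) differs from x³α₁Δ₁₂ + x⁴α₂Δ₃₁ by a coboundary δf for some linear map f : B³₀₁ → ℂ. -/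
/-- The action of an automorphism `φ` of `B³₀₁` with matrix
`[[x,0,0],[y,x²,0],[z,xy,x³]]` on the cohomology classes `∇₁ = [Δ₁₂]`, `∇₂ = [Δ₃₁]`
sends `α₁∇₁ + α₂∇₂` to `x³α₁∇₁ + x⁴α₂∇₂`: the pulled-back form differs from
`x³α₁Δ₁₂ + x⁴α₂Δ₃₁` by a coboundary. -/
theorem B301_action_on_cohomology (α₁ α₂ x y z : ℂ) (hx : x ≠ 0)
    (φ : (Fin 3 → ℂ) ≃ₗ[ℂ] (Fin 3 → ℂ))
    (hφ : ∀ u v : Fin 3 → ℂ, φ (mB301 u v) = mB301 (φ u) (φ v))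
    (h0 : φ ((Pi.single 0 1 : Fin 3 → ℂ)) = x • (Pi.single 0 1 : Fin 3 → ℂ) + y • (Pi.single 1 1 : Fin 3 → ℂ) + z • (Pi.single 2 1 : Fin 3 → ℂ))
    (h1 : φ ((Pi.single 1 1 : Fin 3 → ℂ)) = x ^ 2 • (Pi.single 1 1 : Fin 3 → ℂ) + (x * y) • (Pi.single 2 1 : Fin 3 → ℂ))
    (h2 : φ ((Pi.single 2 1 : Fin 3 → ℂ)) = x ^ 3 • (Pi.single 2 1 : Fin 3 → ℂ)) :
    ∃ f : (Fin 3 → ℂ) →ₗ[ℂ] ℂ,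
      ∀ u v : Fin 3 → ℂ,
        α₁ * (φ u 0 * φ v 1) + α₂ * (φ u 2 * φ v 0) =
          x ^ 3 * α₁ * (u 0 * v 1) + x ^ 4 * α₂ * (u 2 * v 0) + f (mB301 u v) := by
  refine ⟨(α₁ * x * y + α₂ * x * z) • LinearMap.proj (R := ℂ) (φ := fun _ : Fin 3 => ℂ) 1 +
      (α₂ * x ^ 2 * y) • LinearMap.proj (R := ℂ) (φ := fun _ : Fin 3 => ℂ) 2, ?_⟩
  have hrep : ∀ u : Fin 3 → ℂ,
      u = u 0 • (Pi.single 0 1 : Fin 3 → ℂ) + u 1 • (Pi.single 1 1 : Fin 3 → ℂ) + u 2 • (Pi.single 2 1 : Fin 3 → ℂ) := by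
    intro u; funext i; fin_cases i <;> simp [Pi.single_apply]
  have hφu : ∀ u : Fin 3 → ℂ,
      φ u = ![x * u 0, y * u 0 + x ^ 2 * u 1, z * u 0 + x * y * u 1 + x ^ 3 * u 2] := by
    intro u
    conv_lhs => rw [hrep u]
    simp only [map_add, map_smul, h0, h1, h2]
    funext i; fin_cases i <;> simp [Pi.single_apply] <;> ring
  intro u v
  rw [hφu u, hφu v]
  simp [mB301]
  ring
end
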